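/- Let g : ℝᵐ → ℝ ∪ {∞} be a proper convex function whose epigraph is a polyhedral convex set, let z̄ ∈ dom g and λ̄ ∈ ∂g(z̄). Then λ̄ ∈ ri ∂g(z̄) (the relative interior of the subdifferential) if and only if the critical cone K_g(z̄,λ̄) := {w ∈ ℝᵐ | dg(z̄)(w) = ⟨λ̄, w⟩} is a linear subspace of ℝᵐ. -/

import Mathlib

open Filter Topology Set Metric

noncomputable section

/-- A polyhedral convex set: a finite intersection of closed half-spaces. -/
def IsPolyhedralSet {E : Type*} [AddCommGroup E] [Module ℝ E] (C : Set E) : Prop :=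
  ∃ (s : ℕ) (b : Fin s → (E →ₗ[ℝ] ℝ)) (β : Fin s → ℝ), C = {x | ∀ i, b i x ≤ β i}

/-- A polyhedral function: proper (never `⊥`, somewhere finite) with polyhedral epigraph. -/
def IsPolyhedralFn {E : Type*} [AddCommGroup E] [Module ℝ E] (g : E → EReal) : Prop :=
  (∃ z, g z ≠ ⊤) ∧ (∀ z, g z ≠ ⊥) ∧
    IsPolyhedralSet {p : E × ℝ | g p.1 ≤ (p.2 : EReal)}

/-- Tangent cone to a convex set: closure of the cone of feasible directions. -/
def tcone {E : Type*} [NormedAddCommGroup E] [NormedSpace ℝ E] (C : Set E) (x : E) : Set E :=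
  closure {w | ∃ t : ℝ, 0 < t ∧ x + t • w ∈ C}

/-- Convex subdifferential of an extended-real-valued function. -/
def subdiff {E : Type*} [NormedAddCommGroup E] [InnerProductSpace ℝ E]
    (g : E → EReal) (z : E) : Set E :=
  {v | ∀ x, g z + ((inner ℝ v (x - z) : ℝ) : EReal) ≤ g x}

/-- Subderivative: `dg(z)(w) = liminf_{t↓0, w'→w} (g(z+tw')-g(z))/t`. -/
def subderiv {E : Type*} [NormedAddCommGroup E] [NormedSpace ℝ E]
    (g : E → EReal) (z : E) (w : E) : EReal :=
  Filter.liminf (fun p : ℝ × E => (g (z + p.1 • p.2) - g z) * (((p.1)⁻¹ : ℝ) : EReal))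
    ((nhdsWithin 0 (Set.Ioi (0 : ℝ))) ×ˢ 𝓝 w)

/-- Critical cone `K_g(z,v) = {w | dg(z)(w) = ⟨v,w⟩}`. -/
def Kcone {E : Type*} [NormedAddCommGroup E] [InnerProductSpace ℝ E]
    (g : E → EReal) (z v : E) : Set E :=
  {w | subderiv g z w = ((inner ℝ v w : ℝ) : EReal)}

/-- Normal cone of convex analysis. -/
def ncone {E : Type*} [NormedAddCommGroup E] [InnerProductSpace ℝ E]
    (C : Set E) (x : E) : Set E :=
  {v | ∀ y ∈ C, (inner ℝ v (y - x) : ℝ) ≤ 0}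

/-- A set is a linear subspace. -/
def IsLinSubspace {E : Type*} [AddCommGroup E] [Module ℝ E] (K : Set E) : Prop :=
  ∃ S : Submodule ℝ E, K = ↑S

/-- Polar cone. -/
def polarCone {E : Type*} [NormedAddCommGroup E] [InnerProductSpace ℝ E] (K : Set E) : Set E :=
  {u | ∀ w ∈ K, (inner ℝ u w : ℝ) ≤ 0}

/-- Fenchel conjugate. -/
def fconj {E : Type*} [NormedAddCommGroup E] [InnerProductSpace ℝ E]
    (g : E → EReal) (v : E) : EReal :=
  ⨆ z, ((inner ℝ v z : ℝ) : EReal) - g z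

/-- Bouligand (contingent) tangent cone, via sequences. -/
def btcone {E : Type*} [NormedAddCommGroup E] [NormedSpace ℝ E] (Ω : Set E) (x : E) : Set E :=
  {w | ∃ (t : ℕ → ℝ) (v : ℕ → E), (∀ n, 0 < t n) ∧ Tendsto t atTop (𝓝 0) ∧
      Tendsto v atTop (𝓝 w) ∧ ∀ n, x + t n • v n ∈ Ω}

/-- Clarke (regular) tangent cone, via sequences. -/
def clarkeT {E : Type*} [NormedAddCommGroup E] [NormedSpace ℝ E] (Ω : Set E) (xb : E) : Set E :=
  {w | ∀ (x : ℕ → E) (t : ℕ → ℝ), (∀ n, x n ∈ Ω) → Tendsto x atTop (𝓝 xb) →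
      (∀ n, 0 < t n) → Tendsto t atTop (𝓝 0) →
      ∃ v : ℕ → E, Tendsto v atTop (𝓝 w) ∧ ∀ n, x n + t n • v n ∈ Ω}

/-- Paratingent cone, via sequences. -/
def paraT {E : Type*} [NormedAddCommGroup E] [NormedSpace ℝ E] (Ω : Set E) (xb : E) : Set E :=
  {w | ∃ (x : ℕ → E) (t : ℕ → ℝ) (v : ℕ → E), (∀ n, x n ∈ Ω) ∧ Tendsto x atTop (𝓝 xb) ∧
      (∀ n, 0 < t n) ∧ Tendsto t atTop (𝓝 0) ∧ Tendsto v atTop (𝓝 w) ∧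
      ∀ n, x n + t n • v n ∈ Ω}

section AuxNC
variable {E : Type*} [NormedAddCommGroup E] [InnerProductSpace ℝ E]

lemma mem_II {C : Set E} {x : E} (hx : x ∈ C) :
    x ∈ intrinsicInterior ℝ C ↔
      ∃ ε > 0, ∀ y ∈ (affineSpan ℝ C : Set E), dist y x < ε → y ∈ C := by
  rw [mem_intrinsicInterior]
  constructor
  · rintro ⟨y, hy, rfl⟩
    rw [mem_interior_iff_mem_nhds, Metric.mem_nhds_iff] at hy
    obtain ⟨ε, hε, hball⟩ := hy
    refine ⟨ε, hε, fun z hz hdist => ?_⟩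
    have : (⟨z, hz⟩ : affineSpan ℝ C) ∈ Metric.ball y ε := by
      simpa [Metric.mem_ball, Subtype.dist_eq] using hdist
    exact hball this
  · rintro ⟨ε, hε, h⟩
    have hxs : x ∈ affineSpan ℝ C := subset_affineSpan ℝ C hx
    refine ⟨⟨x, hxs⟩, ?_, rfl⟩
    rw [mem_interior_iff_mem_nhds, Metric.mem_nhds_iff]
    exact ⟨ε, hε, fun z hz => h z z.2 (by simpa [Metric.mem_ball, Subtype.dist_eq] using hz)⟩

lemma aux_forward [FiniteDimensional ℝ E] {C : Set E} {x : E} (hx : x ∈ C)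
    (h : x ∈ intrinsicInterior ℝ C) :
    ncone C x = (((affineSpan ℝ C).direction)ᗮ : Submodule ℝ E) := by
  obtain ⟨ε, hε, hball⟩ := (mem_II hx).1 h
  ext v
  constructor
  · intro hv
    obtain ⟨v₁, hv₁, v₂, hv₂, hdecomp⟩ :=
      (affineSpan ℝ C).direction.exists_add_mem_mem_orthogonal v
    have hxs : x ∈ affineSpan ℝ C := subset_affineSpan ℝ C hx
    set t : ℝ := ε / (2 * (‖v₁‖ + 1)) with ht
    have htpos : 0 < t := by positivity
    have hy : x + t • v₁ ∈ (affineSpan ℝ C : Set E) := by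
      have := AffineSubspace.vadd_mem_of_mem_direction
        ((affineSpan ℝ C).direction.smul_mem t hv₁) hxs
      simpa [vadd_eq_add, add_comm] using this
    have hdist : dist (x + t • v₁) x < ε := by
      rw [dist_eq_norm]
      have h1 : ‖x + t • v₁ - x‖ = t * ‖v₁‖ := by
        simp [norm_smul, abs_of_pos htpos]
      rw [h1, ht]
      rw [div_mul_eq_mul_div, div_lt_iff₀ (by positivity)]
      nlinarith [norm_nonneg v₁]
    have hmem : x + t • v₁ ∈ C := hball _ hy hdist
    have hip : (inner ℝ v (x + t • v₁ - x) : ℝ) ≤ 0 := hv _ hmem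
    have hip2 : t * (inner ℝ v v₁ : ℝ) ≤ 0 := by
      simpa [inner_smul_right] using hip
    have hvv1 : (inner ℝ v v₁ : ℝ) ≤ 0 := by nlinarith
    have horth : (inner ℝ v₂ v₁ : ℝ) = 0 := by
      have := (Submodule.mem_orthogonal _ v₂).1 hv₂ _ hv₁
      rwa [real_inner_comm] at this
    have hexp : (inner ℝ v v₁ : ℝ) = ‖v₁‖ ^ 2 := by
      rw [hdecomp, inner_add_left, horth, real_inner_self_eq_norm_sq]
      ring
    have hv10 : v₁ = 0 := by
      have h5 : ‖v₁‖ ^ 2 ≤ 0 := hexp ▸ hvv1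
      have h6 : ‖v₁‖ = 0 := by nlinarith [norm_nonneg v₁]
      exact norm_eq_zero.1 h6
    rw [hdecomp, hv10, zero_add]
    exact hv₂
  · intro hv y hy
    have hd : y - x ∈ (affineSpan ℝ C).direction := by
      simpa using AffineSubspace.vsub_mem_direction (subset_affineSpan ℝ C hy)
        (subset_affineSpan ℝ C hx)
    have := (Submodule.mem_orthogonal _ v).1 hv _ hd
    rw [real_inner_comm] at this
    simp [ncone, this]

lemma aux_converse [FiniteDimensional ℝ E] {C : Set E} {x : E} (hconv : Convex ℝ C)
    (hclosed : IsClosed C) (hx : x ∈ C)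
    (hN : ∃ S : Submodule ℝ E, ncone C x = ↑S) : x ∈ intrinsicInterior ℝ C := by
  by_contra hri
  rw [mem_II hx] at hri
  push_neg at hri
  have hseq : ∀ n : ℕ, ∃ z, z ∈ (affineSpan ℝ C : Set E) ∧ dist z x < 1/(n+1) ∧ z ∉ C := by
    intro n
    obtain ⟨z, hz1, hz2, hz3⟩ := hri (1/(n+1)) (by positivity)
    exact ⟨z, hz1, hz2, hz3⟩
  choose y hy1 hy2 hy3 using hseq
  have hytend : Tendsto y atTop (𝓝 x) := by
    rw [tendsto_iff_dist_tendsto_zero]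
    exact squeeze_zero (fun n => dist_nonneg) (fun n => (hy2 n).le)
      tendsto_one_div_add_atTop_nhds_zero_nat
  set D := (affineSpan ℝ C).direction with hD
  have hsep : ∀ n, ∃ u : E, u ∈ D ∧ ‖u‖ = 1 ∧ ∀ a ∈ C, (inner ℝ u (a - y n) : ℝ) < 0 := by
    intro n
    obtain ⟨f, cc, hfa, hfy⟩ := geometric_hahn_banach_closed_point hconv hclosed (hy3 n)
    set v := (InnerProductSpace.toDual ℝ E).symm f with hv
    set u := ((Submodule.orthogonalProjection D v : D) : E) with hu
    have hyn : y n ∈ affineSpan ℝ C := hy1 n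
    have key : ∀ a ∈ C, (inner ℝ u (a - y n) : ℝ) < 0 := by
      intro a ha
      have hd : a - y n ∈ D := by
        simpa using AffineSubspace.vsub_mem_direction (subset_affineSpan ℝ C ha) hyn
      have h2 : (inner ℝ (a - y n) (v - u) : ℝ) = 0 :=
        (Submodule.mem_orthogonal _ _).1
          (Submodule.sub_starProjection_mem_orthogonal (K := D) v) _ hd
      have h3 : (inner ℝ u (a - y n) : ℝ) = inner ℝ v (a - y n) := by
        have h2' := real_inner_comm (a - y n) (v - u)
        rw [h2] at h2'
        rw [inner_sub_left] at h2'
        linarith [real_inner_comm u (a - y n), real_inner_comm v (a - y n)]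
      have h4 : (inner ℝ v (a - y n) : ℝ) = f a - f (y n) := by
        rw [hv, InnerProductSpace.toDual_symm_apply, map_sub]
      rw [h3, h4]
      linarith [hfa a ha, hfy]
    have hu0 : u ≠ 0 := by
      intro h0
      have := key x hx
      rw [h0] at this
      simp at this
    refine ⟨‖u‖⁻¹ • u, D.smul_mem _ (Submodule.orthogonalProjection D v).2, ?_, ?_⟩
    · rw [norm_smul, norm_inv, norm_norm, inv_mul_cancel₀ (norm_ne_zero_iff.2 hu0)]
    · intro a ha
      rw [inner_smul_left]
      have h5 := key a ha
      have h6 : (0:ℝ) < ‖u‖⁻¹ := by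
        have := norm_pos_iff.2 hu0
        positivity
      simp only [RCLike.conj_to_real]
      exact mul_neg_of_pos_of_neg h6 h5
  choose u huD hunorm huneg using hsep
  have hK : IsCompact (Metric.sphere (0:E) 1 ∩ (D : Set E)) :=
    (isCompact_sphere 0 1).inter_right D.closed_of_finiteDimensional
  have humem : ∀ n, u n ∈ Metric.sphere (0:E) 1 ∩ (D : Set E) := fun n =>
    ⟨by simp [hunorm n], huD n⟩
  obtain ⟨v, hvmem, φ, hφ, hcv⟩ := hK.tendsto_subseq humem
  have hvn : v ∈ ncone C x := by
    intro a ha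
    have hlim : Tendsto (fun k => (inner ℝ (u (φ k)) (a - y (φ k)) : ℝ)) atTop
        (𝓝 (inner ℝ v (a - x))) :=
      hcv.inner (tendsto_const_nhds.sub (hytend.comp hφ.tendsto_atTop))
    exact le_of_tendsto hlim (Eventually.of_forall fun k => (huneg _ a ha).le)
  obtain ⟨S, hS⟩ := hN
  have hvS : v ∈ S := by rw [← SetLike.mem_coe, ← hS]; exact hvn
  have hnegv : -v ∈ ncone C x := by rw [hS]; exact S.neg_mem hvS
  have heq : ∀ a ∈ C, (inner ℝ v (a - x) : ℝ) = 0 := by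
    intro a ha
    have h1 := hvn a ha
    have h2 := hnegv a ha
    rw [inner_neg_left] at h2
    linarith
  obtain ⟨p, hp⟩ := Set.Nonempty.intrinsicInterior hconv ⟨x, hx⟩
  have hpC : p ∈ C := intrinsicInterior_subset hp
  obtain ⟨ε₀, hε₀, hball⟩ := (mem_II hpC).1 hp
  have hvD : ∀ d ∈ D, (inner ℝ v d : ℝ) = 0 := by
    intro d hd
    set t : ℝ := ε₀ / (2 * (‖d‖ + 1)) with ht
    have htpos : 0 < t := by positivity
    have hpd : p + t • d ∈ C := by
      apply hball
      · have hps : p ∈ affineSpan ℝ C := subset_affineSpan ℝ C hpC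
        have := AffineSubspace.vadd_mem_of_mem_direction (D.smul_mem t hd) hps
        simpa [vadd_eq_add, add_comm] using this
      · rw [dist_eq_norm]
        have h1 : ‖p + t • d - p‖ = t * ‖d‖ := by simp [norm_smul, abs_of_pos htpos]
        rw [h1, ht, div_mul_eq_mul_div, div_lt_iff₀ (by positivity)]
        nlinarith [norm_nonneg d]
    have h1 := heq _ hpd
    have h2 := heq _ hpC
    have h3 : (inner ℝ v (p + t • d - x) : ℝ) = inner ℝ v (p - x) + t * inner ℝ v d := by
      have h4 : p + t • d - x = (p - x) + t • d := by abel
      rw [h4, inner_add_right, inner_smul_right]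
    rw [h3, h2] at h1
    have h5 : t * (inner ℝ v d : ℝ) = 0 := by linarith
    exact (mul_eq_zero.1 h5).resolve_left (ne_of_gt htpos)
  have hvv : (inner ℝ v v : ℝ) = 0 := hvD v hvmem.2
  have hnv : ‖v‖ = 1 := by simpa using hvmem.1
  rw [real_inner_self_eq_norm_sq, hnv] at hvv
  norm_num at hvv

end AuxNC

section AuxPoly
variable {E : Type*} [NormedAddCommGroup E] [InnerProductSpace ℝ E] {n : ℕ}

lemma EVaux (γ K : Fin n → ℝ) (hγ : ∀ i, 0 ≤ γ i) (h : ∀ i, γ i = 0 → K i ≤ 0) :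
    ∀ᶠ t : ℝ in 𝓝[>] (0:ℝ), ∀ i, t * K i ≤ γ i := by
  rw [eventually_all]
  intro i
  rcases (hγ i).eq_or_lt with hγi | hγi
  · filter_upwards [eventually_mem_nhdsWithin] with t ht
    have := h i hγi.symm
    rw [← hγi]
    exact mul_nonpos_of_nonneg_of_nonpos (le_of_lt ht) this
  · have h1 : ∀ᶠ t : ℝ in 𝓝 0, |t - 0| < γ i / (|K i| + 1) :=
      eventually_abs_sub_lt 0 (by positivity)
    filter_upwards [h1.filter_mono nhdsWithin_le_nhds] with t ht
    rw [sub_zero] at ht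
    have h2 : t * K i ≤ |t| * (|K i| + 1) := by
      calc t * K i ≤ |t * K i| := le_abs_self _
      _ = |t| * |K i| := abs_mul _ _
      _ ≤ |t| * (|K i| + 1) := by nlinarith [abs_nonneg t]
    have h3 : |t| * (|K i| + 1) < γ i := (lt_div_iff₀ (by positivity)).1 ht
    linarith

variable (g : E → EReal) (zb : E) (gb : ℝ) (a : Fin n → E) (c γ : Fin n → ℝ)

lemma Qchar (hgz : g zb = (gb : EReal)) (hbot : ∀ z, g z ≠ ⊥)
    (hEpi : ∀ (u : E) (s : ℝ), g (zb + u) ≤ ((gb + s : ℝ) : EReal) ↔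
      ∀ i, inner ℝ (a i) u + c i * s ≤ γ i)
    {t : ℝ} (ht : 0 < t) (w' : E) (s : ℝ) :
    ((g (zb + t • w') - g zb) * ((t⁻¹ : ℝ) : EReal) ≤ (s : EReal)) ↔
      ∀ i, t * ((inner ℝ (a i) w' : ℝ) + c i * s) ≤ γ i := by
  have hrhs := hEpi (t • w') (t * s)
  simp only [inner_smul_right] at hrhs
  have hiff : (∀ i, t * (inner ℝ (a i) w' : ℝ) + c i * (t * s) ≤ γ i) ↔
      ∀ i, t * ((inner ℝ (a i) w' : ℝ) + c i * s) ≤ γ i := by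
    apply forall_congr'
    intro i
    rw [show t * (inner ℝ (a i) w' : ℝ) + c i * (t * s) =
      t * ((inner ℝ (a i) w' : ℝ) + c i * s) by ring]
  rw [← hiff, ← hrhs, hgz]
  by_cases hXtop : g (zb + t • w') = ⊤
  · rw [hXtop]
    have h1 : ((⊤ : EReal) - (gb : EReal)) * ((t⁻¹ : ℝ) : EReal) = ⊤ := by
      rw [EReal.top_sub_coe, EReal.top_mul_of_pos (EReal.coe_pos.2 (inv_pos.2 ht))]
    rw [h1]
    simp only [top_le_iff]
    exact iff_of_false (EReal.coe_ne_top _) (EReal.coe_ne_top _)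
  · obtain ⟨x, hx⟩ : ∃ x : ℝ, g (zb + t • w') = (x : EReal) :=
      ⟨(g _).toReal, (EReal.coe_toReal hXtop (hbot _)).symm⟩
    rw [hx, ← EReal.coe_sub, ← EReal.coe_mul, EReal.coe_le_coe_iff, EReal.coe_le_coe_iff,
      ← div_eq_mul_inv, div_le_iff₀ ht]
    constructor <;> intro h <;> nlinarith [mul_comm s t]

lemma Schar (hgz : g zb = (gb : EReal)) (hbot : ∀ z, g z ≠ ⊥)
    (hEpi : ∀ (u : E) (s : ℝ), g (zb + u) ≤ ((gb + s : ℝ) : EReal) ↔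
      ∀ i, inner ℝ (a i) u + c i * s ≤ γ i)
    (hγ : ∀ i, 0 ≤ γ i) (hc : ∀ i, c i ≤ 0) (w : E) (s : ℝ) :
    subderiv g zb w ≤ (s : EReal) ↔ ∀ i, γ i = 0 → (inner ℝ (a i) w : ℝ) + c i * s ≤ 0 := by
  constructor
  · intro hle i hγi
    by_contra hviol
    push_neg at hviol
    set δ : ℝ := (inner ℝ (a i) w : ℝ) + c i * s with hδdef
    have hδ : 0 < δ := hviol
    have hci : 0 < 1 - c i := by have := hc i; linarith
    set ε : ℝ := δ / (2 * (1 - c i)) with hε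
    have hεpos : 0 < ε := by positivity
    have hcε : -(δ/2) ≤ c i * ε := by
      rw [hε, mul_div_assoc']
      have h2' : (0:ℝ) < 2*(1-c i) := by positivity
      rw [show -(δ/2) = -(δ*(1-c i)) / (2*(1-c i)) by field_simp]
      rw [div_le_div_iff₀ h2' h2']
      nlinarith
    set r : ℝ := δ / (4 * (‖a i‖ + 1)) with hr
    have hrpos : 0 < r := by positivity
    have hev : ∀ᶠ p : ℝ × E in (𝓝[>] (0:ℝ)) ×ˢ 𝓝 w,
        ((s + ε : ℝ) : EReal) ≤ (g (zb + p.1 • p.2) - g zb) * (((p.1)⁻¹ : ℝ) : EReal) := by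
      have h1 : ∀ᶠ t : ℝ in 𝓝[>] (0:ℝ), 0 < t := eventually_mem_nhdsWithin
      have h2 : ∀ᶠ w' : E in 𝓝 w, w' ∈ Metric.ball w r := Metric.ball_mem_nhds w hrpos
      filter_upwards [h1.prod_mk h2] with p hp
      obtain ⟨ht, hw'⟩ := hp
      have hkey : ¬ ((g (zb + p.1 • p.2) - g zb) * (((p.1)⁻¹ : ℝ) : EReal)
          ≤ ((s + ε : ℝ) : EReal)) := by
        rw [Qchar g zb gb a c γ hgz hbot hEpi ht p.2 (s + ε)]
        push_neg
        refine ⟨i, ?_⟩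
        rw [hγi]
        have hinner : (inner ℝ (a i) p.2 : ℝ) ≥ (inner ℝ (a i) w : ℝ) - δ/4 := by
          have h3 : (inner ℝ (a i) (p.2 - w) : ℝ) ≥ -(‖a i‖ * ‖p.2 - w‖) := by
            have hA := abs_real_inner_le_norm (a i) (p.2 - w)
            have hB := neg_abs_le (inner ℝ (a i) (p.2 - w) : ℝ)
            linarith
          have h4 : ‖p.2 - w‖ < r := by
            rw [Metric.mem_ball, dist_eq_norm] at hw'
            exact hw'
          have h5 : ‖a i‖ * ‖p.2 - w‖ ≤ ‖a i‖ * r :=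
            mul_le_mul_of_nonneg_left h4.le (norm_nonneg _)
          have h6 : ‖a i‖ * r ≤ δ/4 := by
            rw [hr, mul_div_assoc']
            have h2' : (0:ℝ) < 4*(‖a i‖+1) := by positivity
            rw [div_le_div_iff₀ h2' (by norm_num : (0:ℝ) < 4)]
            nlinarith [norm_nonneg (a i)]
          have h7 : (inner ℝ (a i) p.2 : ℝ) =
              (inner ℝ (a i) w : ℝ) + (inner ℝ (a i) (p.2 - w) : ℝ) := by
            rw [← inner_add_right]
            norm_num
          linarith
        have hpos : 0 < (inner ℝ (a i) p.2 : ℝ) + c i * (s + ε) := by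
          have h8 : c i * (s + ε) = c i * s + c i * ε := by ring
          rw [h8]
          linarith
        nlinarith
      rw [not_le] at hkey
      exact hkey.le
    have hge : ((s + ε : ℝ) : EReal) ≤ subderiv g zb w :=
      le_liminf_of_le (by isBoundedDefault) hev
    have hfin : ((s + ε : ℝ) : EReal) ≤ (s : EReal) := le_trans hge hle
    rw [EReal.coe_le_coe_iff] at hfin
    linarith
  · intro hfeas
    apply liminf_le_of_frequently_le'
    have htend : Tendsto (fun t : ℝ => (t, w)) (𝓝[>] (0:ℝ)) ((𝓝[>] (0:ℝ)) ×ˢ 𝓝 w) :=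
      Tendsto.prodMk tendsto_id tendsto_const_nhds
    apply htend.frequently
    have hev : ∀ᶠ t : ℝ in 𝓝[>] (0:ℝ),
        (g (zb + t • w) - g zb) * ((t⁻¹ : ℝ) : EReal) ≤ (s : EReal) := by
      have h1 := EVaux γ (fun i => (inner ℝ (a i) w : ℝ) + c i * s) hγ hfeas
      filter_upwards [h1, eventually_mem_nhdsWithin] with t h2 h3
      exact (Qchar g zb gb a c γ hgz hbot hEpi h3 w s).2 h2
    exact hev.frequently

lemma S1lem (hgz : g zb = (gb : EReal)) (hbot : ∀ z, g z ≠ ⊥)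
    (hEpi : ∀ (u : E) (s : ℝ), g (zb + u) ≤ ((gb + s : ℝ) : EReal) ↔
      ∀ i, inner ℝ (a i) u + c i * s ≤ γ i)
    (hγ : ∀ i, 0 ≤ γ i) (hc : ∀ i, c i ≤ 0) {v : E} (hv : v ∈ subdiff g zb) (w : E) :
    ((inner ℝ v w : ℝ) : EReal) ≤ subderiv g zb w := by
  by_contra hlt
  push_neg at hlt
  obtain ⟨s, h1, h2⟩ := EReal.lt_iff_exists_real_btwn.1 hlt
  have hfeas : ∀ i, γ i = 0 → (inner ℝ (a i) w : ℝ) + c i * s ≤ 0 :=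
    (Schar g zb gb a c γ hgz hbot hEpi hγ hc w s).1 h1.le
  obtain ⟨t, hts, ht0⟩ :=
    ((EVaux γ (fun i => (inner ℝ (a i) w : ℝ) + c i * s) hγ hfeas).and
      eventually_mem_nhdsWithin).exists
  have ht0' : (0:ℝ) < t := ht0
  have hgx : g (zb + t • w) ≤ ((gb + t * s : ℝ) : EReal) := by
    rw [hEpi]
    intro i
    have h3 := hts i
    have h4 : t * ((inner ℝ (a i) w : ℝ) + c i * s) =
        t * (inner ℝ (a i) w : ℝ) + c i * (t * s) := by ring
    rw [inner_smul_right]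
    linarith [h4 ▸ h3]
  have hsub := hv (zb + t • w)
  have hsub2 : (↑gb + ((inner ℝ v (zb + t • w - zb) : ℝ) : EReal)) ≤ ((gb + t * s : ℝ) : EReal) := by
    rw [← hgz]
    exact le_trans hsub hgx
  rw [add_sub_cancel_left, inner_smul_right, ← EReal.coe_add, EReal.coe_le_coe_iff] at hsub2
  have hlt2 : s < (inner ℝ v w : ℝ) := EReal.coe_lt_coe_iff.1 h2
  nlinarith

lemma D1lem (hgz : g zb = (gb : EReal)) (hbot : ∀ z, g z ≠ ⊥)
    (hEpi : ∀ (u : E) (s : ℝ), g (zb + u) ≤ ((gb + s : ℝ) : EReal) ↔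
      ∀ i, inner ℝ (a i) u + c i * s ≤ γ i)
    (i : Fin n) (hγi : γ i = 0) (hci : c i < 0) :
    (-(c i))⁻¹ • a i ∈ subdiff g zb := by
  intro x
  by_cases hx : g x = ⊤
  · rw [hx]; exact le_top
  obtain ⟨ξ, hξ⟩ : ∃ ξ : ℝ, g x = (ξ : EReal) :=
    ⟨(g x).toReal, (EReal.coe_toReal hx (hbot x)).symm⟩
  have h1 : g (zb + (x - zb)) ≤ ((gb + (ξ - gb) : ℝ) : EReal) := by
    rw [show zb + (x - zb) = x by abel, show gb + (ξ - gb) = ξ by ring, hξ]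
  have h2 := (hEpi (x - zb) (ξ - gb)).1 h1 i
  rw [hγi] at h2
  rw [hgz, hξ, real_inner_smul_left, ← EReal.coe_add, EReal.coe_le_coe_iff]
  have h3 : (0:ℝ) < -(c i) := by linarith
  have h4 : (-(c i))⁻¹ * (inner ℝ (a i) (x - zb) : ℝ) ≤ ξ - gb := by
    rw [inv_mul_le_iff₀ h3]
    nlinarith
  linarith

lemma D2lem (hgz : g zb = (gb : EReal)) (hbot : ∀ z, g z ≠ ⊥)
    (hEpi : ∀ (u : E) (s : ℝ), g (zb + u) ≤ ((gb + s : ℝ) : EReal) ↔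
      ∀ i, inner ℝ (a i) u + c i * s ≤ γ i)
    {lb' : E} (hlb : lb' ∈ subdiff g zb) (i : Fin n) (hγi : γ i = 0) (hci : c i = 0) :
    lb' + a i ∈ subdiff g zb := by
  intro x
  by_cases hx : g x = ⊤
  · rw [hx]; exact le_top
  obtain ⟨ξ, hξ⟩ : ∃ ξ : ℝ, g x = (ξ : EReal) :=
    ⟨(g x).toReal, (EReal.coe_toReal hx (hbot x)).symm⟩
  have h1 : g (zb + (x - zb)) ≤ ((gb + (ξ - gb) : ℝ) : EReal) := by
    rw [show zb + (x - zb) = x by abel, show gb + (ξ - gb) = ξ by ring, hξ]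
  have h2 := (hEpi (x - zb) (ξ - gb)).1 h1 i
  rw [hγi, hci] at h2
  have hlbx := hlb x
  rw [hgz, hξ, ← EReal.coe_add, EReal.coe_le_coe_iff] at hlbx ⊢
  rw [inner_add_left]
  linarith

lemma subdiff_convex (hgz : g zb = (gb : EReal)) : Convex ℝ (subdiff g zb) := by
  intro v1 h1 v2 h2 θ1 θ2 hθ1 hθ2 hsum x
  have e1 := h1 x
  have e2 := h2 x
  set u := x - zb with hu
  have hcomb : (inner ℝ (θ1 • v1 + θ2 • v2) u : ℝ) =
      θ1 * (inner ℝ v1 u : ℝ) + θ2 * (inner ℝ v2 u : ℝ) := by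
    rw [inner_add_left, real_inner_smul_left, real_inner_smul_left]
  rcases le_total (inner ℝ v1 u : ℝ) (inner ℝ v2 u : ℝ) with hle | hle
  · refine le_trans ?_ e2
    apply add_le_add_right
    rw [EReal.coe_le_coe_iff, hcomb]
    have key : θ1 * (inner ℝ v2 u : ℝ) + θ2 * (inner ℝ v2 u : ℝ) = (inner ℝ v2 u : ℝ) := by
      rw [← add_mul, hsum, one_mul]
    linarith [mul_le_mul_of_nonneg_left hle hθ1, key]
  · refine le_trans ?_ e1
    apply add_le_add_right
    rw [EReal.coe_le_coe_iff, hcomb]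
    have key : θ1 * (inner ℝ v1 u : ℝ) + θ2 * (inner ℝ v1 u : ℝ) = (inner ℝ v1 u : ℝ) := by
      rw [← add_mul, hsum, one_mul]
    linarith [mul_le_mul_of_nonneg_left hle hθ2, key]

lemma subdiff_closed (hgz : g zb = (gb : EReal)) : IsClosed (subdiff g zb) := by
  have heq : subdiff g zb =
      ⋂ x, {v : E | ((gb + (inner ℝ v (x - zb) : ℝ) : ℝ) : EReal) ≤ g x} := by
    ext v
    simp only [subdiff, Set.mem_setOf_eq, Set.mem_iInter, hgz, ← EReal.coe_add]
  rw [heq]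
  refine isClosed_iInter fun x => isClosed_le ?_ continuous_const
  exact continuous_coe_real_ereal.comp
    (continuous_const.add (continuous_id.inner continuous_const))

end AuxPoly


/-- relative interior subgradients of a polyhedral function correspond
to the critical cone being a linear subspace. -/

theorem stmt1 {m : ℕ} (g : EuclideanSpace ℝ (Fin m) → EReal) (hg : IsPolyhedralFn g)
    (zb lb : EuclideanSpace ℝ (Fin m)) (hz : g zb ≠ ⊤) (hl : lb ∈ subdiff g zb) :
    lb ∈ intrinsicInterior ℝ (subdiff g zb) ↔ IsLinSubspace (Kcone g zb lb) := by
  classical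
  obtain ⟨hproper, hbot, nI, b, β, hepi⟩ := hg
  set gb : ℝ := (g zb).toReal with hgb
  have hgz : g zb = (gb : EReal) := (EReal.coe_toReal hz (hbot zb)).symm
  set a : Fin nI → EuclideanSpace ℝ (Fin m) := fun i =>
    (InnerProductSpace.toDual ℝ _).symm
      (LinearMap.toContinuousLinearMap ((b i).comp (LinearMap.inl ℝ _ ℝ))) with ha
  set c : Fin nI → ℝ := fun i => b i (0, 1) with hcdef
  set γ : Fin nI → ℝ := fun i => β i - b i (zb, gb) with hγdef
  have hb : ∀ (i) (x : EuclideanSpace ℝ (Fin m)) (r : ℝ),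
      b i (x, r) = (inner ℝ (a i) x : ℝ) + c i * r := by
    intro i x r
    have h1 : ((x, r) : _ × ℝ) = (x, 0) + (0, r) := by simp
    rw [h1, map_add]
    have h2 : (inner ℝ (a i) x : ℝ) = b i (x, 0) := by
      simp only [ha]
      rw [InnerProductSpace.toDual_symm_apply]
      simp
    have h3 : b i (0, r) = c i * r := by
      have h4 : ((0, r) : EuclideanSpace ℝ (Fin m) × ℝ)
          = r • ((0, 1) : EuclideanSpace ℝ (Fin m) × ℝ) := by
        simp [Prod.smul_mk]
      rw [h4, map_smul]
      simp only [hcdef, smul_eq_mul]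
      ring
    rw [h2, h3]
  have hEpi : ∀ (u) (s : ℝ), g (zb + u) ≤ ((gb + s : ℝ) : EReal) ↔
      ∀ i, (inner ℝ (a i) u : ℝ) + c i * s ≤ γ i := by
    intro u s
    have hmem := Set.ext_iff.1 hepi (zb + u, gb + s)
    simp only [Set.mem_setOf_eq] at hmem
    rw [show ((zb + u, gb + s) : _ × ℝ) = (zb, gb) + (u, s) from rfl] at hmem
    rw [hmem]
    apply forall_congr'
    intro i
    rw [map_add, hb i u s]
    simp only [hγdef]
    constructor <;> intro <;> linarith
  have hγ : ∀ i, 0 ≤ γ i := by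
    intro i
    have h0 := (hEpi 0 0).1 (by rw [add_zero, add_zero, hgz]) i
    simpa using h0
  have hc : ∀ i, c i ≤ 0 := by
    intro i
    by_contra hpos
    push_neg at hpos
    set s : ℝ := (γ i + 1) / c i with hs
    have hspos : 0 < s := div_pos (by linarith [hγ i]) hpos
    have h0 := (hEpi 0 s).1 (by
      rw [add_zero, hgz, EReal.coe_le_coe_iff]
      linarith) i
    simp only [inner_zero_right, zero_add] at h0
    rw [hs, mul_div_cancel₀ _ (ne_of_gt hpos)] at h0
    linarith
  have hconv : Convex ℝ (subdiff g zb) := subdiff_convex g zb gb hgz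
  have hclosed : IsClosed (subdiff g zb) := subdiff_closed g zb gb hgz
  have hKN : Kcone g zb lb = ncone (subdiff g zb) lb := by
    ext w
    constructor
    · intro hw v hv
      have h1 : ((inner ℝ v w : ℝ) : EReal) ≤ ((inner ℝ lb w : ℝ) : EReal) := by
        rw [← hw]
        exact S1lem g zb gb a c γ hgz hbot hEpi hγ hc hv w
      rw [EReal.coe_le_coe_iff] at h1
      rw [inner_sub_right]
      have e1 := real_inner_comm w v
      have e2 := real_inner_comm w lb
      linarith
    · intro hw
      have hle : subderiv g zb w ≤ ((inner ℝ lb w : ℝ) : EReal) := by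
        rw [Schar g zb gb a c γ hgz hbot hEpi hγ hc w]
        intro i hγi
        rcases (hc i).lt_or_eq with hci | hci
        · have hv := D1lem g zb gb a c γ hgz hbot hEpi i hγi hci
          have h5 := hw _ hv
          rw [inner_sub_right, inner_smul_right] at h5
          have h3 : (0:ℝ) < -(c i) := by linarith
          have h6 : (-(c i))⁻¹ * (inner ℝ w (a i) : ℝ) ≤ (inner ℝ w lb : ℝ) := by linarith
          have h7 : (inner ℝ w (a i) : ℝ) ≤ -(c i) * (inner ℝ w lb : ℝ) :=
            (inv_mul_le_iff₀ h3).1 h6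
          have e1 : (inner ℝ (a i) w : ℝ) = inner ℝ w (a i) := real_inner_comm _ _
          have e2 : (inner ℝ lb w : ℝ) = inner ℝ w lb := real_inner_comm _ _
          rw [e1, e2]
          nlinarith
        · have hv := D2lem g zb gb a c γ hgz hbot hEpi hl i hγi hci
          have h5 := hw _ hv
          rw [show lb + a i - lb = a i by abel] at h5
          rw [hci, zero_mul, add_zero, real_inner_comm]
          exact h5
      have hge : ((inner ℝ lb w : ℝ) : EReal) ≤ subderiv g zb w :=
        S1lem g zb gb a c γ hgz hbot hEpi hγ hc hl w
      exact le_antisymm hle hge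
  rw [hKN]
  constructor
  · intro hri
    exact ⟨((affineSpan ℝ (subdiff g zb)).direction)ᗮ, aux_forward hl hri⟩
  · intro hS
    exact aux_converse hconv hclosed hl hS
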